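/- Let m ≥ 1 and n ≥ 1 be integers. Define Z = 1 / (n · Σ_{k=1}^{m} 1/k) and w_{k,r} = (Z/k) · Σ_{h=r}^{n} (1/h) for 1 ≤ k ≤ m, 1 ≤ r ≤ n. Then (Z, w) is a feasible point of the OPA linear program: all w_{k,r} ≥ 0, all ordering constraints hold (with equality), and Σ_{k=1}^m Σ_{r=1}^n w_{k,r} = 1. -/

import Mathlib

lemma aux_split (r n : ℕ) (h2 : r ≤ n) :
    ∑ h ∈ Finset.Icc r n, (1 : ℝ) / h = 1 / r + ∑ h ∈ Finset.Icc (r + 1) n, (1 : ℝ) / h := by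
  rw [Finset.Icc_eq_cons_Ioc h2, Finset.sum_cons, Finset.Icc_add_one_left_eq_Ioc]

lemma aux_double (n : ℕ) :
    ∑ r ∈ Finset.Icc 1 n, ∑ h ∈ Finset.Icc r n, (1 : ℝ) / h = n := by
  rw [Finset.sum_comm' (t' := Finset.Icc 1 n) (s' := fun h => Finset.Icc 1 h)]
  · rw [Finset.sum_congr rfl (g := fun h => (1:ℝ)) fun h hh => ?_]
    · simp [Nat.card_Icc]
    · simp only [Finset.mem_Icc] at hh
      rw [Finset.sum_const, Nat.card_Icc]
      have : (h:ℝ) ≠ 0 := Nat.cast_ne_zero.mpr (by omega)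
      rw [Nat.add_sub_cancel, nsmul_eq_mul]
      field_simp
  · intro r h
    simp only [Finset.mem_Icc]
    omega

lemma aux_Hm (m : ℕ) (hm : 1 ≤ m) : 0 < ∑ k ∈ Finset.Icc 1 m, (1 : ℝ) / k := by
  apply Finset.sum_pos
  · intro k hk
    simp only [Finset.mem_Icc] at hk
    have : (0:ℝ) < k := Nat.cast_pos.mpr (by omega)
    positivity
  · exact ⟨1, by simp [hm]⟩

/-- Feasibility predicate for the OPA linear program with `m` experts and `n` criteria:
`w k r` is the weight expert `k` assigns to the criterion ranked in position `r`. -/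
def OPAFeasible (m n : ℕ) (Z : ℝ) (w : ℕ → ℕ → ℝ) : Prop :=
  (∀ k ∈ Finset.Icc 1 m, ∀ r ∈ Finset.Icc 1 n, 0 ≤ w k r) ∧
  (∀ k ∈ Finset.Icc 1 m, ∀ r ∈ Finset.Icc 1 (n - 1),
      (k : ℝ) * r * (w k r - w k (r + 1)) ≥ Z) ∧
  (∀ k ∈ Finset.Icc 1 m, (k : ℝ) * n * w k n ≥ Z) ∧
  (∑ k ∈ Finset.Icc 1 m, ∑ r ∈ Finset.Icc 1 n, w k r = 1)

/-- The optimal value `Z*` of the OPA linear program: the supremum of `Z` over feasible points. -/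
noncomputable def OPAOptimal (m n : ℕ) : ℝ :=
  sSup {Z : ℝ | ∃ w : ℕ → ℕ → ℝ, OPAFeasible m n Z w}

/-- The point `Z = 1/(n * Σ_{k=1}^m 1/k)`, `w k r = (Z/k) * Σ_{h=r}^n 1/h` is feasible
for the OPA linear program, and all ordering constraints hold with equality. -/
theorem opa_candidate_feasible (m n : ℕ) (hm : 1 ≤ m) (hn : 1 ≤ n) :
    OPAFeasible m n (1 / ((n : ℝ) * ∑ k ∈ Finset.Icc 1 m, (1 : ℝ) / k))
      (fun k r => (1 / ((n : ℝ) * ∑ j ∈ Finset.Icc 1 m, (1 : ℝ) / j)) / (k : ℝ) *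
        ∑ h ∈ Finset.Icc r n, (1 : ℝ) / h) ∧
    (∀ k ∈ Finset.Icc 1 m, ∀ r ∈ Finset.Icc 1 (n - 1),
      (k : ℝ) * r *
        ((1 / ((n : ℝ) * ∑ j ∈ Finset.Icc 1 m, (1 : ℝ) / j)) / (k : ℝ) *
            ∑ h ∈ Finset.Icc r n, (1 : ℝ) / h -
          (1 / ((n : ℝ) * ∑ j ∈ Finset.Icc 1 m, (1 : ℝ) / j)) / (k : ℝ) *
            ∑ h ∈ Finset.Icc (r + 1) n, (1 : ℝ) / h) =
        1 / ((n : ℝ) * ∑ j ∈ Finset.Icc 1 m, (1 : ℝ) / j)) ∧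
    (∀ k ∈ Finset.Icc 1 m,
      (k : ℝ) * n *
        ((1 / ((n : ℝ) * ∑ j ∈ Finset.Icc 1 m, (1 : ℝ) / j)) / (k : ℝ) *
          ∑ h ∈ Finset.Icc n n, (1 : ℝ) / h) =
        1 / ((n : ℝ) * ∑ j ∈ Finset.Icc 1 m, (1 : ℝ) / j)) := by
  have hH : 0 < ∑ j ∈ Finset.Icc 1 m, (1 : ℝ) / j := aux_Hm m hm
  have hnR : (0:ℝ) < n := Nat.cast_pos.mpr hn
  set H := ∑ j ∈ Finset.Icc 1 m, (1 : ℝ) / j with hHdef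
  set Z := 1 / ((n : ℝ) * H) with hZdef
  have hZpos : 0 < Z := by rw [hZdef]; positivity
  -- middle equality
  have heq2 : ∀ k ∈ Finset.Icc 1 m, ∀ r ∈ Finset.Icc 1 (n - 1),
      (k : ℝ) * r * (Z / (k : ℝ) * ∑ h ∈ Finset.Icc r n, (1 : ℝ) / h -
        Z / (k : ℝ) * ∑ h ∈ Finset.Icc (r + 1) n, (1 : ℝ) / h) = Z := by
    intro k hk r hr
    simp only [Finset.mem_Icc] at hk hr
    have hrn : r ≤ n := by omega
    have hkR : (k:ℝ) ≠ 0 := Nat.cast_ne_zero.mpr (by omega)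
    have hrR : (r:ℝ) ≠ 0 := Nat.cast_ne_zero.mpr (by omega)
    rw [aux_split r n hrn]
    field_simp
    ring
  -- last equality
  have heq3 : ∀ k ∈ Finset.Icc 1 m,
      (k : ℝ) * n * (Z / (k : ℝ) * ∑ h ∈ Finset.Icc n n, (1 : ℝ) / h) = Z := by
    intro k hk
    simp only [Finset.mem_Icc] at hk
    have hkR : (k:ℝ) ≠ 0 := Nat.cast_ne_zero.mpr (by omega)
    have hnR' : (n:ℝ) ≠ 0 := ne_of_gt hnR
    rw [Finset.Icc_self, Finset.sum_singleton]
    field_simp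
  refine ⟨⟨?_, ?_, ?_, ?_⟩, heq2, heq3⟩
  · intro k hk r hr
    simp only [Finset.mem_Icc] at hk
    have hkR : (0:ℝ) ≤ k := Nat.cast_nonneg k
    have : 0 ≤ ∑ h ∈ Finset.Icc r n, (1 : ℝ) / h :=
      Finset.sum_nonneg fun h _ => by positivity
    positivity
  · intro k hk r hr
    exact ge_of_eq (heq2 k hk r hr)
  · intro k hk
    exact ge_of_eq (heq3 k hk)
  · have : ∀ k ∈ Finset.Icc 1 m,
        ∑ r ∈ Finset.Icc 1 n, Z / (k : ℝ) * ∑ h ∈ Finset.Icc r n, (1 : ℝ) / h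
          = Z * n * (1 / k) := by
      intro k hk
      rw [← Finset.mul_sum, aux_double n]
      ring
    rw [Finset.sum_congr rfl this, ← Finset.mul_sum, ← hHdef, hZdef]
    field_simp
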